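/- Let (ω_0,...,ω_{n+1}) be an algebraic key sequence and suppose p_k·ω_k = β_{k,0}ω_0 + β_{k,1}ω_1 + ... + β_{k,k-1}ω_{k-1} is the unique representation with 0 ≤ β_{k,j} < p_j for 1 ≤ j ≤ k-1. Then β_{k,0} ≥ 0. -/

import Mathlib

lemma exists_nat_rep (ω : ℕ → ℕ) (k : ℕ) (v : ℕ)
    (hv : v ∈ AddSubmonoid.closure (ω '' {j | j < k})) :
    ∃ c : ℕ → ℕ, v = ∑ j ∈ Finset.range k, c j * ω j := by
  induction hv using AddSubmonoid.closure_induction with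
  | mem x hx =>
      obtain ⟨j, hj, rfl⟩ := hx
      refine ⟨fun i => if i = j then 1 else 0, ?_⟩
      simp [ite_mul, Finset.sum_ite_eq', Finset.mem_range, Set.mem_setOf_eq.mp hj]
  | zero => exact ⟨0, by simp⟩
  | add a b ha hb iha ihb =>
      obtain ⟨c, rfl⟩ := iha
      obtain ⟨c', rfl⟩ := ihb
      exact ⟨c + c', by simp [add_mul, Finset.sum_add_distrib]⟩

section aux
variable (n : ℕ) (ω : ℕ → ℕ)
    (hpos : ∀ k ≤ n + 1, 0 < ω k)
    (d p : ℕ → ℕ)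
    (hd : ∀ k, d k = (Finset.range (k + 1)).gcd ω)
    (hp : ∀ k, 1 ≤ k → p k = d (k - 1) / d k)

include hd hpos

lemma d_pos : ∀ m, 0 < d m := by
  intro m
  rw [hd]
  rw [Nat.pos_iff_ne_zero, Ne, Finset.gcd_eq_zero_iff]
  intro h
  exact (hpos 0 (Nat.zero_le _)).ne' (h 0 (Finset.mem_range.mpr (Nat.succ_pos m)))

omit hpos in
lemma d_dvd : ∀ m j, j ≤ m → d m ∣ ω j := by
  intro m j hj
  rw [hd]
  exact Finset.gcd_dvd (Finset.mem_range.mpr (Nat.lt_succ_of_le hj))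

omit hpos in
lemma d_succ : ∀ m, d (m + 1) = Nat.gcd (d m) (ω (m + 1)) := by
  intro m
  rw [hd, hd, Finset.range_add_one, Finset.gcd_insert, Nat.gcd_comm]
  rfl

omit hpos in include hp in
lemma p_mul_d : ∀ m, 1 ≤ m → p m * d m = d (m - 1) := by
  intro m hm
  rw [hp m hm]
  refine Nat.div_mul_cancel ?_
  obtain ⟨m', rfl⟩ := Nat.exists_eq_add_of_le' hm
  rw [d_succ ω d hd m']
  simpa using Nat.gcd_dvd_left (d m') (ω (m' + 1))

include hp in
lemma p_pos : ∀ m, 1 ≤ m → 0 < p m := by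
  intro m hm
  have := p_mul_d (ω:=ω) (d:=d) (p:=p) hd hp m hm
  have h2 := d_pos n ω hpos d hd (m - 1)
  have h3 : p m ≠ 0 := by
    intro h
    rw [h, zero_mul] at this
    omega
  omega

include hp in
lemma normalizeDigits (halg : ∀ k, 1 ≤ k → k ≤ n →
      (p k * ω k) ∈ AddSubmonoid.closure (ω '' {j | j < k})) :
    ∀ m, m ≤ n → ∀ c : ℕ → ℕ, ∃ e : ℕ → ℕ,
      (∀ j, 1 ≤ j → j < m → e j < p j) ∧
      ∑ j ∈ Finset.range m, c j * ω j = ∑ j ∈ Finset.range m, e j * ω j := by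
  intro m
  induction m with
  | zero => intro _ c; exact ⟨c, by omega, rfl⟩
  | succ m ih =>
      intro hmn c
      rcases Nat.eq_zero_or_pos m with rfl | hm1
      · exact ⟨c, by omega, rfl⟩
      · -- carry at position m
        obtain ⟨a, ha⟩ := exists_nat_rep ω m _ (halg m hm1 (le_of_lt hmn))
        have hpm : 0 < p m := p_pos n ω hpos d p hd hp m hm1
        set q := c m / p m with hq
        set r := c m % p m with hr
        obtain ⟨e', he'⟩ := ih (le_of_lt hmn) (fun j => c j + q * a j)
        refine ⟨fun j => if j = m then r else e' j, ?_, ?_⟩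
        · intro j hj1 hj2
          by_cases h : j = m
          · subst h; simpa [hr] using Nat.mod_lt _ hpm
          · simpa [h] using he'.1 j hj1 (by omega)
        · rw [Finset.sum_range_succ, Finset.sum_range_succ]
          have h1 : ∀ j ∈ Finset.range m,
              (if j = m then r else e' j) * ω j = e' j * ω j := by
            intro j hj
            rw [if_neg (by simpa using Finset.mem_range.mp hj |>.ne)]
          rw [Finset.sum_congr rfl h1,
            show (fun j => if j = m then r else e' j) m = r from if_pos rfl, ← he'.2]
          have hc : c m = q * p m + r := (Nat.div_add_mod' (c m) (p m)).symm
          calc ∑ j ∈ Finset.range m, c j * ω j + c m * ω m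
              = ∑ j ∈ Finset.range m, c j * ω j + q * (p m * ω m) + r * ω m := by
                rw [hc]; ring
            _ = ∑ j ∈ Finset.range m, (c j + q * a j) * ω j + r * ω m := by
                rw [ha, Finset.mul_sum]
                simp only [add_mul, Finset.sum_add_distrib, mul_assoc]
            _ = _ := rfl

include hp in
lemma zero_comb :
    ∀ m, m ≤ n + 1 → ∀ δ : ℕ → ℤ,
      (∀ j, 1 ≤ j → j < m → -(p j : ℤ) < δ j ∧ δ j < p j) →
      (∑ j ∈ Finset.range m, δ j * (ω j : ℤ) = 0) →
      ∀ j < m, δ j = 0 := by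
  intro m
  induction m with
  | zero => intro _ _ _ _ j hj; omega
  | succ m ih =>
      intro hmn δ hb hsum
      have hsum' := hsum
      rw [Finset.sum_range_succ] at hsum'
      have hδm : δ m = 0 := by
        rcases Nat.eq_zero_or_pos m with rfl | hm1
        · have h0 : δ 0 * (ω 0 : ℤ) = 0 := by simpa using hsum'
          have hw := hpos 0 (by omega)
          rcases mul_eq_zero.mp h0 with h | h
          · exact h
          · exfalso
            have : ω 0 = 0 := by exact_mod_cast h
            omega
        · obtain ⟨m', rfl⟩ := Nat.exists_eq_add_of_le' hm1
          set M := m' + 1 with hM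
          have hg_pos : 0 < d M := d_pos n ω hpos d hd M
          have hg_dvd : d M ∣ ω M := d_dvd (ω := ω) (d := d) hd M M le_rfl
          set g := d M with hgdef
          set u := ω M / g with hu
          have hgu : ω M = g * u := (Nat.mul_div_cancel' hg_dvd).symm
          have hpd : p M * g = d m' := by
            have := p_mul_d (ω:=ω) (d:=d) (p:=p) hd hp M (by omega)
            simpa [hM] using this
          have hcop : Nat.Coprime (p M) u := by
            have hgcd : Nat.gcd (d m') (ω M) = g := (d_succ ω d hd m').symm
            have hpos' : 0 < Nat.gcd (d m') (ω M) := by rw [hgcd]; exact hg_pos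
            have hco := Nat.coprime_div_gcd_div_gcd hpos'
            rw [hgcd] at hco
            have hpe : p M = d m' / g := by
              have := hp M (by omega)
              simpa [hM] using this
            rw [hpe]
            exact hco
          have hDdvd : (d m' : ℤ) ∣ ∑ j ∈ Finset.range M, δ j * (ω j : ℤ) := by
            refine Finset.dvd_sum ?_
            intro j hj
            have hj' : j ≤ m' := by
              have := Finset.mem_range.mp hj; omega
            exact Dvd.dvd.mul_left
              (Int.natCast_dvd_natCast.mpr (d_dvd (ω := ω) (d := d) hd m' j hj')) (δ j)
          have hDdvd2 : (d m' : ℤ) ∣ δ M * (ω M : ℤ) := by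
            have : δ M * (ω M : ℤ) = -(∑ j ∈ Finset.range M, δ j * (ω j : ℤ)) := by
              linarith [hsum']
            rw [this]
            exact dvd_neg.mpr hDdvd
          have h1 : ((p M : ℤ) * g) ∣ δ M * ((g : ℤ) * u) := by
            have e1 : ((p M : ℤ) * g) = (d m' : ℤ) := by exact_mod_cast hpd
            have e2 : ((ω M : ℤ)) = (g : ℤ) * u := by exact_mod_cast hgu
            rw [e1, ← e2]
            exact hDdvd2
          obtain ⟨t, ht⟩ := h1
          have hgne : (g : ℤ) ≠ 0 := by exact_mod_cast hg_pos.ne'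
          have h2 : (p M : ℤ) ∣ δ M * u := by
            refine ⟨t, ?_⟩
            have : (g : ℤ) * (δ M * u) = (g : ℤ) * ((p M : ℤ) * t) := by
              linear_combination ht
            exact mul_left_cancel₀ hgne this
          have h3 : p M ∣ (δ M).natAbs * u := by
            have h4 := Int.natAbs_dvd_natAbs.mpr h2
            simpa [Int.natAbs_mul] using h4
          have h5 : p M ∣ (δ M).natAbs := hcop.dvd_of_dvd_mul_right h3
          obtain ⟨hlb, hub⟩ := hb M (by omega) (by omega)
          have h6 : (δ M).natAbs < p M := by omega
          have h7 : (δ M).natAbs = 0 := Nat.eq_zero_of_dvd_of_lt h5 h6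
          exact Int.natAbs_eq_zero.mp h7
      have hsum2 : ∑ j ∈ Finset.range m, δ j * (ω j : ℤ) = 0 := by
        rw [hδm] at hsum'
        simpa using hsum'
      have hrest := ih (by omega) δ (fun j h1 h2 => hb j h1 (by omega)) hsum2
      intro j hj
      rcases Nat.lt_succ_iff_lt_or_eq.mp hj with h | rfl
      · exact hrest j h
      · exact hδm

end aux

/-- For an algebraic key sequence, in the unique representation
p_k·ω_k = Σ_{j<k} β_{k,j}·ω_j with 0 ≤ β_{k,j} < p_j for 1 ≤ j ≤ k-1,
the coefficient β_{k,0} is nonnegative. -/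
theorem statement3 (n : ℕ) (ω : ℕ → ℕ)
    (hpos : ∀ k ≤ n + 1, 0 < ω k)
    (d p : ℕ → ℕ)
    (hd : ∀ k, d k = (Finset.range (k + 1)).gcd ω)
    (hp : ∀ k, 1 ≤ k → p k = d (k - 1) / d k)
    (hgcd : d (n + 1) = 1)
    (hkey : ∀ k, 1 ≤ k → k ≤ n → ω (k + 1) < p k * ω k)
    (halg : ∀ k, 1 ≤ k → k ≤ n →
      (p k * ω k) ∈ AddSubmonoid.closure (ω '' {j | j < k})) :
    ∀ k (hk1 : 1 ≤ k), k ≤ n →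
      ∀ β : Fin k → ℤ,
        ((p k : ℤ) * (ω k : ℤ) = ∑ j : Fin k, β j * (ω (j : ℕ) : ℤ)) →
        (∀ j : Fin k, 1 ≤ (j : ℕ) → 0 ≤ β j ∧ β j < (p (j : ℕ) : ℤ)) →
        0 ≤ β ⟨0, hk1⟩ := by
  intro k hk1 hkn β heq hβ
  obtain ⟨c, hc⟩ := exists_nat_rep ω k _ (halg k hk1 hkn)
  obtain ⟨e, he1, he2⟩ := normalizeDigits n ω hpos d p hd hp halg k hkn c
  have hval : (p k * ω k : ℕ) = ∑ j ∈ Finset.range k, e j * ω j := hc.trans he2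
  set B : ℕ → ℤ := fun j => if h : j < k then β ⟨j, h⟩ else 0 with hB
  have hBsum : ∑ j : Fin k, β j * (ω (j : ℕ) : ℤ)
      = ∑ j ∈ Finset.range k, B j * (ω j : ℤ) := by
    rw [← Fin.sum_univ_eq_sum_range (fun j => B j * (ω j : ℤ)) k]
    refine Finset.sum_congr rfl ?_
    intro j _
    simp [hB, j.isLt]
  set δ : ℕ → ℤ := fun j => B j - e j with hδ
  have hsum : ∑ j ∈ Finset.range k, δ j * (ω j : ℤ) = 0 := by
    simp only [hδ, sub_mul, Finset.sum_sub_distrib]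
    rw [← hBsum, ← heq]
    have h2 : ∑ j ∈ Finset.range k, (e j : ℤ) * (ω j : ℤ) = (p k : ℤ) * (ω k : ℤ) := by
      exact_mod_cast hval.symm
    rw [h2]
    ring
  have hzero := zero_comb n ω hpos d p hd hp k (by omega) δ ?_ hsum
  · have h0 := hzero 0 (by omega)
    have hB0 : B 0 = β ⟨0, hk1⟩ := dif_pos hk1
    have he0 : (0 : ℤ) ≤ (e 0 : ℤ) := Int.natCast_nonneg _
    have : δ 0 = B 0 - e 0 := rfl
    omega
  · intro j hj1 hj2
    obtain ⟨hl, hu⟩ := hβ ⟨j, hj2⟩ hj1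
    have hu' : β ⟨j, hj2⟩ < (p j : ℤ) := hu
    have heu : (e j : ℤ) < (p j : ℤ) := by exact_mod_cast he1 j hj1 hj2
    have hel : (0 : ℤ) ≤ (e j : ℤ) := Int.natCast_nonneg _
    have hBj : B j = β ⟨j, hj2⟩ := by simp [hB, hj2]
    have : δ j = B j - e j := rfl
    constructor <;> omega
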